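/- On U = {(x,y) ∈ ℝ² : x > 0}, the metric g₂ given by the matrix G₂(x,y) = diag(sinh⁴x, cosh²x) (i.e., g₂ = (sinh⁴x)dx² + (cosh²x)dy²) has Gauss curvature K = 1/sinh⁴x > 0, and the function k := √K = 1/sinh²x satisfies the tensor equation (∇²k)_{ij} = (5/(2k)) ∂_i k ∂_j k − 2k³ (g₂)_{ij} on U. -/

import Mathlib

noncomputable section
open Matrix Real

/-- Points of the parameter domain `U ⊆ ℝ²`. -/
abbrev Pt : Type := Fin 2 → ℝ
/-- Vectors in `ℝ³`. -/
abbrev Vec3 : Type := Fin 3 → ℝ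

/-- Partial derivative `∂ᵢ` of a scalar function on `ℝ²`. -/
def pd (i : Fin 2) (f : Pt → ℝ) : Pt → ℝ :=
  fun p => fderiv ℝ f p (Pi.single i 1)

/-- Partial derivative `∂ᵢ` of an `ℝ³`-valued function on `ℝ²`. -/
def pdV (i : Fin 2) (f : Pt → Vec3) : Pt → Vec3 :=
  fun p => fderiv ℝ f p (Pi.single i 1)

/-- The induced metric (first fundamental form) `gᵢⱼ = ∂ᵢφ ⬝ ∂ⱼφ` of a map `φ : ℝ² → ℝ³`. -/
def indMetric (φ : Pt → Vec3) : Pt → Matrix (Fin 2) (Fin 2) ℝ :=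
  fun p => Matrix.of fun i j => pdV i φ p ⬝ᵥ pdV j φ p

/-- The unit normal `n = (∂₁φ × ∂₂φ)/‖∂₁φ × ∂₂φ‖`. -/
def unitNormal (φ : Pt → Vec3) : Pt → Vec3 :=
  fun p => (Real.sqrt ((crossProduct (pdV 0 φ p) (pdV 1 φ p)) ⬝ᵥ
      (crossProduct (pdV 0 φ p) (pdV 1 φ p))))⁻¹ •
    crossProduct (pdV 0 φ p) (pdV 1 φ p)

/-- The second fundamental form `hᵢⱼ = n ⬝ ∂ᵢ∂ⱼφ`. -/
def sff (φ : Pt → Vec3) : Pt → Matrix (Fin 2) (Fin 2) ℝ :=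
  fun p => Matrix.of fun i j => unitNormal φ p ⬝ᵥ pdV i (pdV j φ) p

/-- Christoffel symbols `Γ^k_{ij}` of a metric `g`. -/
def christoffel (g : Pt → Matrix (Fin 2) (Fin 2) ℝ) (k i j : Fin 2) : Pt → ℝ :=
  fun p => (1/2) * ∑ l, (g p)⁻¹ k l *
    (pd i (fun q => g q j l) p + pd j (fun q => g q i l) p - pd l (fun q => g q i j) p)

/-- Covariant derivative `∇ᵢ h_{jk}` of a symmetric 2-tensor `h` with respect to `g`. -/
def covD (g h : Pt → Matrix (Fin 2) (Fin 2) ℝ) (i j k : Fin 2) : Pt → ℝ :=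
  fun p => pd i (fun q => h q j k) p
    - ∑ l, christoffel g l i j p * h p l k
    - ∑ l, christoffel g l i k p * h p j l

/-- Covariant Hessian `(∇²u)ᵢⱼ = ∂ᵢ∂ⱼu − Σₖ Γ^k_{ij} ∂ₖu`. -/
def hess (g : Pt → Matrix (Fin 2) (Fin 2) ℝ) (u : Pt → ℝ) (i j : Fin 2) : Pt → ℝ :=
  fun p => pd i (pd j u) p - ∑ k, christoffel g k i j p * pd k u p

/-- The curvature component `R₁₂₁₂` of a metric `g` (indices `1,2` rendered as `0,1`). -/
def R1212 (g : Pt → Matrix (Fin 2) (Fin 2) ℝ) : Pt → ℝ :=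
  fun p => ∑ m, g p 0 m *
    (pd 0 (christoffel g m 1 1) p - pd 1 (christoffel g m 1 0) p +
      ∑ l, (christoffel g m 0 l p * christoffel g l 1 1 p -
            christoffel g m 1 l p * christoffel g l 1 0 p))

/-- The Gauss curvature `K = R₁₂₁₂ / det g` of a metric `g`. -/
def gaussK (g : Pt → Matrix (Fin 2) (Fin 2) ℝ) : Pt → ℝ :=
  fun p => R1212 g p / (g p).det

/-- The squared norm `|du|²_g = Σᵢⱼ g^{ij} ∂ᵢu ∂ⱼu`. -/
def gradSq (g : Pt → Matrix (Fin 2) (Fin 2) ℝ) (u : Pt → ℝ) : Pt → ℝ :=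
  fun p => ∑ i, ∑ j, (g p)⁻¹ i j * pd i u p * pd j u p

/-- `g` is a smooth Riemannian metric on `U`: smooth entries, symmetric and
positive definite at each point of `U`. -/
def IsMetricOn (g : Pt → Matrix (Fin 2) (Fin 2) ℝ) (U : Set Pt) : Prop :=
  (∀ i j, ContDiffOn ℝ (⊤ : ℕ∞) (fun p => g p i j) U) ∧
  (∀ p ∈ U, (g p).IsSymm ∧ (g p).PosDef)

/-- `φ` is a smooth immersion on `U`. -/
def IsImmersionOn (φ : Pt → Vec3) (U : Set Pt) : Prop :=
  ContDiffOn ℝ (⊤ : ℕ∞) φ U ∧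
  ∀ p ∈ U, LinearIndependent ℝ ![pdV 0 φ p, pdV 1 φ p]

/-- The model metric `g₂ = sinh⁴x dx² + cosh²x dy²` on the half-plane `x > 0`. -/
def modelG : Pt → Matrix (Fin 2) (Fin 2) ℝ :=
  fun q => !![Real.sinh (q 0) ^ 4, 0; 0, Real.cosh (q 0) ^ 2]

/-- The candidate square root of the (absolute) Gauss curvature. -/
def modelk : Pt → ℝ :=
  fun q => 1 / Real.sinh (q 0) ^ 2

section Helpers

lemma pd_eval (h : ℝ → ℝ) (i : Fin 2) (p : Pt) :
    pd i (fun q : Pt => h (q 0)) p = deriv h (p 0) * (Pi.single i (1:ℝ) : Pt) 0 := by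
  by_cases hd : DifferentiableAt ℝ h (p 0)
  · have he : DifferentiableAt ℝ (fun q : Pt => q 0) p :=
      (ContinuousLinearMap.proj (R := ℝ) (φ := fun _ : Fin 2 => ℝ) 0).differentiableAt
    have hcomp := fderiv_comp p hd he
    have hproj : fderiv ℝ (fun q : Pt => q 0) p
        = ContinuousLinearMap.proj (R := ℝ) (φ := fun _ : Fin 2 => ℝ) 0 :=
      (ContinuousLinearMap.proj (R := ℝ) (φ := fun _ : Fin 2 => ℝ) 0).fderiv
    unfold pd
    rw [show (fun q : Pt => h (q 0)) = h ∘ (fun q : Pt => q 0) from rfl, hcomp, hproj]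
    simp only [ContinuousLinearMap.coe_comp', Function.comp_apply,
      ContinuousLinearMap.proj_apply]
    rw [show (Pi.single i (1:ℝ) : Pt) 0 = (Pi.single i (1:ℝ) : Pt) 0 • (1:ℝ) by simp,
      ContinuousLinearMap.map_smul, smul_eq_mul, fderiv_apply_one_eq_deriv]
    simp [smul_eq_mul, mul_comm]
  · have hnd : ¬ DifferentiableAt ℝ (fun q : Pt => h (q 0)) p := by
      intro hf
      apply hd
      have hs : DifferentiableAt ℝ (fun t : ℝ => Function.update p 0 t) (p 0) := by
        apply differentiableAt_pi.2
        intro j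
        by_cases hj : j = 0
        · subst hj
          simp only [Function.update_self]
          exact differentiableAt_fun_id
        · simp only [Function.update_of_ne hj]
          exact differentiableAt_const _
      have hf' : DifferentiableAt ℝ (fun q : Pt => h (q 0)) (Function.update p 0 (p 0)) := by
        rwa [Function.update_eq_self]
      have key : DifferentiableAt ℝ
          ((fun q : Pt => h (q 0)) ∘ (fun t : ℝ => Function.update p 0 t)) (p 0) :=
        hf'.comp (p 0) hs
      have heq : ((fun q : Pt => h (q 0)) ∘ (fun t : ℝ => Function.update p 0 t)) = h := by
        funext t; simp
      rwa [heq] at key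
    unfold pd
    rw [fderiv_zero_of_not_differentiableAt hnd, deriv_zero_of_not_differentiableAt hd]
    simp

lemma pd0_eval' (h : ℝ → ℝ) (f : Pt → ℝ) (hf : ∀ q, f q = h (q 0)) (p : Pt) :
    pd 0 f p = deriv h (p 0) := by
  have : f = fun q : Pt => h (q 0) := funext hf
  rw [this, pd_eval]; simp

lemma pd1_eval' (h : ℝ → ℝ) (f : Pt → ℝ) (hf : ∀ q, f q = h (q 0)) (p : Pt) :
    pd 1 f p = 0 := by
  have : f = fun q : Pt => h (q 0) := funext hf
  rw [this, pd_eval]; simp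

lemma pd_const (i : Fin 2) (c : ℝ) (p : Pt) : pd i (fun _ => c) p = 0 := by
  unfold pd; rw [fderiv_fun_const]; simp

lemma not_diff_k : ¬ DifferentiableAt ℝ (fun x : ℝ => 1 / Real.sinh x ^ 2) 0 := by
  intro hd
  have hc : ContinuousAt (fun x : ℝ => (1 / Real.sinh x ^ 2) * Real.sinh x ^ 2) 0 :=
    hd.continuousAt.mul ((Real.continuous_sinh.pow 2).continuousAt)
  have h0 : (1 / Real.sinh (0:ℝ) ^ 2) * Real.sinh (0:ℝ) ^ 2 = 0 := by
    simp
  have ht : Filter.Tendsto (fun x : ℝ => (1 / Real.sinh x ^ 2) * Real.sinh x ^ 2)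
      (nhdsWithin 0 {(0:ℝ)}ᶜ) (nhds 0) := by
    have h2 := hc.tendsto
    rw [h0] at h2
    exact h2.mono_left nhdsWithin_le_nhds
  have heq : ∀ x ∈ ({(0:ℝ)}ᶜ : Set ℝ), (1 / Real.sinh x ^ 2) * Real.sinh x ^ 2 = 1 := by
    intro x hx
    have : Real.sinh x ≠ 0 := by
      simp only [ne_eq, Real.sinh_eq_zero]
      exact hx
    field_simp
  have ht1 : Filter.Tendsto (fun _ : ℝ => (1:ℝ)) (nhdsWithin 0 {(0:ℝ)}ᶜ) (nhds 0) := by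
    refine ht.congr' ?_
    filter_upwards [self_mem_nhdsWithin] with x hx
    exact heq x hx
  have := tendsto_nhds_unique ht1 tendsto_const_nhds
  norm_num at this

lemma deriv_k (x : ℝ) :
    deriv (fun x : ℝ => 1 / Real.sinh x ^ 2) x = -2 * Real.cosh x / Real.sinh x ^ 3 := by
  rcases eq_or_ne (Real.sinh x) 0 with h | h
  · have hx : x = 0 := Real.sinh_eq_zero.1 h
    subst hx
    rw [deriv_zero_of_not_differentiableAt not_diff_k, h]
    norm_num
  · have h2 : Real.sinh x ^ 2 ≠ 0 := pow_ne_zero _ h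
    have hs : HasDerivAt (fun x : ℝ => Real.sinh x ^ 2)
        (2 * Real.sinh x ^ 1 * Real.cosh x) x := (Real.hasDerivAt_sinh x).pow 2
    have hD : HasDerivAt (fun x : ℝ => 1 / Real.sinh x ^ 2)
        ((0 * Real.sinh x ^ 2 - 1 * (2 * Real.sinh x ^ 1 * Real.cosh x)) / (Real.sinh x ^ 2) ^ 2)
        x := (hasDerivAt_const x 1).div hs h2
    rw [hD.deriv]
    field_simp
    ring

lemma deriv_sinh4 (x : ℝ) :
    deriv (fun x : ℝ => Real.sinh x ^ 4) x = 4 * Real.sinh x ^ 3 * Real.cosh x := by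
  have := ((Real.hasDerivAt_sinh x).fun_pow 4).deriv
  rw [this]; norm_num

lemma deriv_cosh2 (x : ℝ) :
    deriv (fun x : ℝ => Real.cosh x ^ 2) x = 2 * Real.cosh x * Real.sinh x := by
  have := ((Real.hasDerivAt_cosh x).fun_pow 2).deriv
  rw [this]; ring

lemma modelG_det (q : Pt) : (modelG q).det = Real.sinh (q 0)^4 * Real.cosh (q 0)^2 := by
  simp [modelG, Matrix.det_fin_two_of]

lemma modelG_inv_zero (q : Pt) (h : Real.sinh (q 0) = 0) : (modelG q)⁻¹ = 0 := by
  apply Matrix.nonsing_inv_apply_not_isUnit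
  rw [modelG_det, h]
  norm_num

lemma modelG_inv (q : Pt) (h : Real.sinh (q 0) ≠ 0) :
    (modelG q)⁻¹ = !![(Real.sinh (q 0)^4)⁻¹, 0; 0, (Real.cosh (q 0)^2)⁻¹] := by
  have hc : Real.cosh (q 0) ≠ 0 := (Real.cosh_pos (x := q 0)).ne'
  rw [Matrix.inv_def, modelG_det]
  rw [show (modelG q).adjugate = !![Real.cosh (q 0)^2, 0; 0, Real.sinh (q 0)^4] by
    simp [modelG, Matrix.adjugate_fin_two_of]]
  rw [Ring.inverse_eq_inv']
  ext i j
  fin_cases i <;> fin_cases j <;>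
    simp [Matrix.smul_apply] <;> (try field_simp) <;> (try ring)

lemma pdg00 (i : Fin 2) (q : Pt) :
    pd i (fun r => modelG r 0 0) q
      = 4 * Real.sinh (q 0)^3 * Real.cosh (q 0) * (Pi.single i (1:ℝ) : Pt) 0 := by
  have h := pd_eval (fun x => Real.sinh x ^ 4) i q
  rw [deriv_sinh4] at h
  exact h

lemma pdg11 (i : Fin 2) (q : Pt) :
    pd i (fun r => modelG r 1 1) q
      = 2 * Real.cosh (q 0) * Real.sinh (q 0) * (Pi.single i (1:ℝ) : Pt) 0 := by
  have h := pd_eval (fun x => Real.cosh x ^ 2) i q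
  rw [deriv_cosh2] at h
  exact h

lemma pdg01 (i : Fin 2) (q : Pt) : pd i (fun r => modelG r 0 1) q = 0 := by
  rw [show (fun r : Pt => modelG r 0 1) = fun _ : Pt => (0:ℝ) from rfl, pd_const]

lemma pdg10 (i : Fin 2) (q : Pt) : pd i (fun r => modelG r 1 0) q = 0 := by
  rw [show (fun r : Pt => modelG r 1 0) = fun _ : Pt => (0:ℝ) from rfl, pd_const]

lemma ch000 : christoffel modelG 0 0 0 = fun q => 2 * Real.cosh (q 0) / Real.sinh (q 0) := by
  funext q
  unfold christoffel
  rcases eq_or_ne (Real.sinh (q 0)) 0 with h | h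
  · rw [modelG_inv_zero q h]
    simp [h]
  · have hc : Real.cosh (q 0) ≠ 0 := (Real.cosh_pos (x := q 0)).ne'
    rw [modelG_inv q h]
    simp only [Fin.sum_univ_two, pdg00, pdg01, pdg10, pdg11]
    norm_num [Matrix.cons_val_zero, Matrix.cons_val_one, Pi.single_apply]
    all_goals (field_simp; try ring)

lemma ch011 : christoffel modelG 0 1 1 = fun q => -(Real.cosh (q 0) / Real.sinh (q 0)^3) := by
  funext q
  unfold christoffel
  rcases eq_or_ne (Real.sinh (q 0)) 0 with h | h
  · rw [modelG_inv_zero q h]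
    simp [h]
  · have hc : Real.cosh (q 0) ≠ 0 := (Real.cosh_pos (x := q 0)).ne'
    rw [modelG_inv q h]
    simp only [Fin.sum_univ_two, pdg00, pdg01, pdg10, pdg11]
    norm_num [Matrix.cons_val_zero, Matrix.cons_val_one, Pi.single_apply]
    all_goals (field_simp; try ring)

lemma ch101 : christoffel modelG 1 0 1 = fun q => Real.sinh (q 0) / Real.cosh (q 0) := by
  funext q
  unfold christoffel
  rcases eq_or_ne (Real.sinh (q 0)) 0 with h | h
  · rw [modelG_inv_zero q h]
    simp [h]
  · have hc : Real.cosh (q 0) ≠ 0 := (Real.cosh_pos (x := q 0)).ne'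
    rw [modelG_inv q h]
    simp only [Fin.sum_univ_two, pdg00, pdg01, pdg10, pdg11]
    norm_num [Matrix.cons_val_zero, Matrix.cons_val_one, Pi.single_apply]
    all_goals (field_simp; try ring)

lemma ch110 : christoffel modelG 1 1 0 = fun q => Real.sinh (q 0) / Real.cosh (q 0) := by
  funext q
  unfold christoffel
  rcases eq_or_ne (Real.sinh (q 0)) 0 with h | h
  · rw [modelG_inv_zero q h]
    simp [h]
  · have hc : Real.cosh (q 0) ≠ 0 := (Real.cosh_pos (x := q 0)).ne'
    rw [modelG_inv q h]
    simp only [Fin.sum_univ_two, pdg00, pdg01, pdg10, pdg11]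
    norm_num [Matrix.cons_val_zero, Matrix.cons_val_one, Pi.single_apply]
    all_goals (field_simp; try ring)

lemma ch001 : christoffel modelG 0 0 1 = fun _ => 0 := by
  funext q
  unfold christoffel
  rcases eq_or_ne (Real.sinh (q 0)) 0 with h | h
  · rw [modelG_inv_zero q h]; simp
  · rw [modelG_inv q h]
    simp only [Fin.sum_univ_two, pdg00, pdg01, pdg10, pdg11]
    norm_num [Matrix.cons_val_zero, Matrix.cons_val_one, Pi.single_apply]

lemma ch010 : christoffel modelG 0 1 0 = fun _ => 0 := by
  funext q
  unfold christoffel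
  rcases eq_or_ne (Real.sinh (q 0)) 0 with h | h
  · rw [modelG_inv_zero q h]; simp
  · rw [modelG_inv q h]
    simp only [Fin.sum_univ_two, pdg00, pdg01, pdg10, pdg11]
    norm_num [Matrix.cons_val_zero, Matrix.cons_val_one, Pi.single_apply]

lemma ch100 : christoffel modelG 1 0 0 = fun _ => 0 := by
  funext q
  unfold christoffel
  rcases eq_or_ne (Real.sinh (q 0)) 0 with h | h
  · rw [modelG_inv_zero q h]; simp
  · rw [modelG_inv q h]
    simp only [Fin.sum_univ_two, pdg00, pdg01, pdg10, pdg11]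
    norm_num [Matrix.cons_val_zero, Matrix.cons_val_one, Pi.single_apply]

lemma ch111 : christoffel modelG 1 1 1 = fun _ => 0 := by
  funext q
  unfold christoffel
  rcases eq_or_ne (Real.sinh (q 0)) 0 with h | h
  · rw [modelG_inv_zero q h]; simp
  · rw [modelG_inv q h]
    simp only [Fin.sum_univ_two, pdg00, pdg01, pdg10, pdg11]
    norm_num [Matrix.cons_val_zero, Matrix.cons_val_one, Pi.single_apply]

end Helpers

/-- On the half-plane `x > 0`, the metric `g₂ = sinh⁴x dx² + cosh²x dy²` has Gauss curvature
`K = 1/sinh⁴x > 0` and `k = √K = 1/sinh²x` satisfies the Darboux-integrability tensor equation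
`(∇²k)ᵢⱼ = (5/(2k)) ∂ᵢk ∂ⱼk - 2k³ gᵢⱼ`. -/
theorem model_metric_check_14 :
    ∀ p : Pt, 0 < p 0 →
      gaussK modelG p = 1 / Real.sinh (p 0) ^ 4 ∧
      0 < gaussK modelG p ∧
      modelk p = Real.sqrt ( (gaussK modelG p)) ∧
      (∀ i j : Fin 2,
        hess modelG modelk i j p =
          (5 / (2 * modelk p)) * pd i modelk p * pd j modelk p
            - 2 * modelk p ^ 3 * modelG p i j) := by
  intro p hp
  have hs0 : 0 < Real.sinh (p 0) := Real.sinh_pos_iff.2 hp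
  have hs : Real.sinh (p 0) ≠ 0 := hs0.ne'
  have hc : Real.cosh (p 0) ≠ 0 := (Real.cosh_pos (x := p 0)).ne'
  -- derivative of Γ^0_{11}
  have hD : HasDerivAt (fun x : ℝ => -(Real.cosh x / Real.sinh x ^ 3))
      (-((Real.sinh (p 0) * Real.sinh (p 0) ^ 3 -
          Real.cosh (p 0) * (3 * Real.sinh (p 0) ^ 2 * Real.cosh (p 0))) /
        (Real.sinh (p 0) ^ 3) ^ 2)) (p 0) := by
    have h1 := ((Real.hasDerivAt_cosh (p 0)).fun_div
      ((Real.hasDerivAt_sinh (p 0)).fun_pow 3) (pow_ne_zero 3 hs)).fun_neg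
    exact h1.congr_deriv (by norm_num)
  have A : pd 0 (fun q : Pt => -(Real.cosh (q 0) / Real.sinh (q 0) ^ 3)) p =
      -((Real.sinh (p 0) * Real.sinh (p 0) ^ 3 -
          Real.cosh (p 0) * (3 * Real.sinh (p 0) ^ 2 * Real.cosh (p 0))) /
        (Real.sinh (p 0) ^ 3) ^ 2) := by
    rw [pd0_eval' (fun x => -(Real.cosh x / Real.sinh x ^ 3)) _ (fun q => rfl) p, hD.deriv]
  have B : pd 1 (fun q : Pt => Real.sinh (q 0) / Real.cosh (q 0)) p = 0 :=
    pd1_eval' (fun x => Real.sinh x / Real.cosh x) _ (fun q => rfl) p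
  have hgk : gaussK modelG p = 1 / Real.sinh (p 0) ^ 4 := by
    unfold gaussK R1212
    rw [modelG_det]
    simp only [Fin.sum_univ_two, ch000, ch011, ch001, ch010, ch100, ch111, ch101, ch110]
    rw [A, B]
    rw [show pd 0 (fun _ : Pt => (0:ℝ)) p = 0 from pd_const 0 0 p,
      show pd 1 (fun _ : Pt => (0:ℝ)) p = 0 from pd_const 1 0 p]
    simp only [modelG, Matrix.of_apply, Matrix.cons_val', Matrix.cons_val_zero,
      Matrix.cons_val_one, Matrix.head_cons, Matrix.empty_val', Matrix.cons_val_fin_one,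
      Matrix.head_fin_const]
    field_simp
    ring
  refine ⟨hgk, ?_, ?_, ?_⟩
  · rw [hgk]
    exact div_pos one_pos (by positivity)
  · rw [hgk, show (1:ℝ) / Real.sinh (p 0) ^ 4 = (1 / Real.sinh (p 0) ^ 2) ^ 2 by ring,
      Real.sqrt_sq (by positivity)]
    rfl
  · -- Hessian equation
    have pk0 : pd 0 modelk = fun q : Pt => -2 * Real.cosh (q 0) / Real.sinh (q 0) ^ 3 := by
      funext q
      rw [pd0_eval' (fun x => 1 / Real.sinh x ^ 2) modelk (fun q => rfl) q, deriv_k]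
    have pk1 : pd 1 modelk = fun _ : Pt => (0:ℝ) := by
      funext q
      rw [pd1_eval' (fun x => 1 / Real.sinh x ^ 2) modelk (fun q => rfl) q]
    have hD2 : HasDerivAt (fun x : ℝ => -2 * Real.cosh x / Real.sinh x ^ 3)
        ((-2 * Real.sinh (p 0) * Real.sinh (p 0) ^ 3 -
            -2 * Real.cosh (p 0) * (3 * Real.sinh (p 0) ^ 2 * Real.cosh (p 0))) /
          (Real.sinh (p 0) ^ 3) ^ 2) (p 0) := by
      have h1 := (((Real.hasDerivAt_cosh (p 0)).const_mul (-2 : ℝ)).fun_div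
        ((Real.hasDerivAt_sinh (p 0)).fun_pow 3) (pow_ne_zero 3 hs))
      exact h1.congr_deriv (by norm_num)
    have p00 : pd 0 (pd 0 modelk) p =
        (-2 * Real.sinh (p 0) * Real.sinh (p 0) ^ 3 -
            -2 * Real.cosh (p 0) * (3 * Real.sinh (p 0) ^ 2 * Real.cosh (p 0))) /
          (Real.sinh (p 0) ^ 3) ^ 2 := by
      rw [pk0, pd0_eval' (fun x => -2 * Real.cosh x / Real.sinh x ^ 3) _ (fun q => rfl) p,
        hD2.deriv]
    have p10 : pd 1 (pd 0 modelk) p = 0 := by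
      rw [pk0]
      exact pd1_eval' (fun x => -2 * Real.cosh x / Real.sinh x ^ 3) _ (fun q => rfl) p
    have p01 : pd 0 (pd 1 modelk) p = 0 := by
      rw [pk1]; exact pd_const 0 0 p
    have p11 : pd 1 (pd 1 modelk) p = 0 := by
      rw [pk1]; exact pd_const 1 0 p
    have vk0 : pd 0 modelk p = -2 * Real.cosh (p 0) / Real.sinh (p 0) ^ 3 := by rw [pk0]
    have vk1 : pd 1 modelk p = 0 := by rw [pk1]
    intro i j
    fin_cases i <;> fin_cases j <;>
      (unfold hess
       simp only [Fin.zero_eta, Fin.mk_one]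
       simp only [Fin.sum_univ_two, ch000, ch011, ch001, ch010, ch100, ch111, ch101, ch110]
       rw [vk0, vk1]
       first
       | rw [p00] | rw [p10] | rw [p01] | rw [p11]
       simp only [modelk, modelG, Matrix.of_apply, Matrix.cons_val', Matrix.cons_val_zero,
         Matrix.cons_val_one, Matrix.head_cons, Matrix.empty_val', Matrix.cons_val_fin_one,
         Matrix.head_fin_const]
       field_simp
       try ring)
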